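/- Let λ ∈ ℝ and l = −1/2 + iλ. The linear span of the family {e_m^l : m ∈ ℤ}, regarded as elements of L²(ℝ, ℂ), is dense in L²(ℝ, ℂ). Equivalently, if f ∈ L²(ℝ, ℂ) satisfies ∫_ℝ f(x) · conj(e_m^l(x)) dx = 0 for every m ∈ ℤ, then f = 0 almost everywhere. -/

import Mathlib

open MeasureTheory
open scoped ComplexConjugate

section EllipticAux

open Complex Filter Topology

lemma sub_I_ne (x : ℝ) : (x : ℂ) - Complex.I ≠ 0 := by
  intro h; have := congrArg Complex.im h; simp at this

lemma add_I_ne (x : ℝ) : (x : ℂ) + Complex.I ≠ 0 := by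
  intro h; have := congrArg Complex.im h; simp at this

/-- The Cayley transform `x ↦ (x+i)/(x−i)` as a map into the circle. -/
noncomputable def cayley (x : ℝ) : Circle :=
  Circle.ofConjDivSelf ((x : ℂ) - Complex.I) (sub_I_ne x)

lemma cayley_coe (x : ℝ) :
    (cayley x : ℂ) = ((x : ℂ) + Complex.I) / ((x : ℂ) - Complex.I) := by
  simp [cayley, map_sub, Complex.conj_ofReal]

lemma cayley_tendsto :
    Tendsto (fun x : ℝ => (cayley x : ℂ)) (cocompact ℝ) (𝓝 1) := by
  rw [← tendsto_sub_nhds_zero_iff]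
  have key : ∀ x : ℝ, (cayley x : ℂ) - 1 = 2 * Complex.I / ((x : ℂ) - Complex.I) := by
    intro x
    rw [cayley_coe]
    field_simp [sub_I_ne x]
    ring
  have hnorm : Tendsto (fun x : ℝ => ‖(x : ℂ) - Complex.I‖) (cocompact ℝ) atTop := by
    apply tendsto_atTop_mono (fun x : ℝ => ?_) tendsto_norm_cocompact_atTop
    calc ‖x‖ = |(((x:ℂ) - Complex.I)).re| := by simp
    _ ≤ ‖(x:ℂ) - Complex.I‖ := Complex.abs_re_le_norm _
    _ = ‖(x:ℂ) - Complex.I‖ := rfl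
  have h2 : Tendsto (fun x : ℝ => 2 * ‖(x : ℂ) - Complex.I‖⁻¹) (cocompact ℝ) (𝓝 0) := by
    have := hnorm.inv_tendsto_atTop
    simpa using this.const_mul (2 : ℝ)
  apply squeeze_zero_norm (fun x => ?_) h2
  rw [key x]
  simp [norm_div, div_eq_mul_inv]

lemma cayley_continuous : Continuous cayley := by
  apply continuous_induced_rng.2
  show Continuous fun x : ℝ => (cayley x : ℂ)
  simp only [cayley_coe]
  exact (Complex.continuous_ofReal.add continuous_const).div
    (Complex.continuous_ofReal.sub continuous_const) sub_I_ne

/-- The Cayley transform on the one-point compactification. -/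
noncomputable def cayleyOP : C(OnePoint ℝ, Circle) :=
  OnePoint.continuousMapMk ⟨cayley, cayley_continuous⟩ 1
    (by
      rw [Filter.coclosedCompact_eq_cocompact]; refine tendsto_subtype_rng.2 ?_
      exact cayley_tendsto)

@[simp] lemma cayleyOP_coe (x : ℝ) : cayleyOP x = cayley x := rfl
@[simp] lemma cayleyOP_infty : cayleyOP OnePoint.infty = 1 := rfl

lemma Circle.coe_zpow' (z : Circle) (m : ℤ) : ((z ^ m : Circle) : ℂ) = (z : ℂ) ^ m := by
  cases m with
  | ofNat n => rfl
  | negSucc n =>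
      rw [zpow_negSucc, zpow_negSucc, Circle.coe_inv]
      norm_cast

lemma Circle.continuous_coe' : Continuous (fun z : Circle => (z : ℂ)) :=
  continuous_induced_dom

/-- The integer powers of the Cayley transform, as continuous functions on `OnePoint ℝ`. -/
noncomputable def VV (m : ℤ) : C(OnePoint ℝ, ℂ) :=
  ⟨fun p => ((cayleyOP p ^ m : Circle) : ℂ),
   Circle.continuous_coe'.comp
     ((continuous_zpow m : Continuous fun z : Circle => z ^ m).comp cayleyOP.continuous)⟩

@[simp] lemma VV_apply (m : ℤ) (p : OnePoint ℝ) : VV m p = ((cayleyOP p : ℂ)) ^ m :=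
  Circle.coe_zpow' _ m

lemma VV_mul (m n : ℤ) : VV m * VV n = VV (m + n) := by
  ext p
  simp [zpow_add₀ (Circle.coe_ne_zero _)]

lemma VV_zero : VV 0 = 1 := by ext p; simp

lemma star_VV (m : ℤ) : star (VV m) = VV (-m) := by
  ext p
  simp only [ContinuousMap.star_apply, VV, ContinuousMap.coe_mk]
  rw [zpow_neg, Circle.coe_inv_eq_conj]
  rfl

lemma cayley_inj : Function.Injective
    (fun x : ℝ => ((x : ℂ) + Complex.I) / ((x : ℂ) - Complex.I)) := by
  intro x y hxy
  simp only at hxy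
  rw [div_eq_div_iff (sub_I_ne x) (sub_I_ne y)] at hxy
  have h2 : (2 : ℂ) * Complex.I * x = 2 * Complex.I * y := by linear_combination -hxy
  have h3 : (x : ℂ) = y := by
    field_simp [Complex.I_ne_zero] at h2
    exact_mod_cast h2
  exact_mod_cast h3

lemma cayley_ne_one (x : ℝ) : ((x : ℂ) + Complex.I) / ((x : ℂ) - Complex.I) ≠ 1 := by
  rw [Ne, div_eq_one_iff_eq (sub_I_ne x)]
  intro h
  have := congrArg Complex.im h
  norm_num at this

lemma VV_sep : ∀ p q : OnePoint ℝ, p ≠ q → VV 1 p ≠ VV 1 q := by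
  have key : ∀ p : OnePoint ℝ, VV 1 p = (cayleyOP p : ℂ) := by
    intro p; rw [VV_apply, zpow_one]
  intro p q hpq
  rw [key, key]
  induction p using OnePoint.rec with
  | infty =>
      induction q using OnePoint.rec with
      | infty => exact absurd rfl hpq
      | coe y =>
          simp only [cayleyOP_infty, cayleyOP_coe, Circle.coe_one, cayley_coe]
          exact fun h => cayley_ne_one y h.symm
  | coe x =>
      induction q using OnePoint.rec with
      | infty =>
          simp only [cayleyOP_infty, cayleyOP_coe, Circle.coe_one, cayley_coe]
          exact cayley_ne_one x
      | coe y =>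
          simp only [cayleyOP_coe, cayley_coe]
          intro h
          exact hpq (by rw [cayley_inj h])

/-- The star subalgebra spanned by the `VV m`. -/
noncomputable def VAlg : StarSubalgebra ℂ C(OnePoint ℝ, ℂ) where
  carrier := Submodule.span ℂ (Set.range VV)
  add_mem' ha hb := Submodule.add_mem _ ha hb
  mul_mem' {a b} ha hb := by
    have hle : Submodule.span ℂ (Set.range VV) * Submodule.span ℂ (Set.range VV) ≤
        Submodule.span ℂ (Set.range VV) := by
      rw [Submodule.span_mul_span]
      apply Submodule.span_le.2
      rintro _ ⟨_, ⟨m, rfl⟩, _, ⟨n, rfl⟩, rfl⟩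
      exact Submodule.subset_span ⟨m + n, (VV_mul m n).symm⟩
    exact hle (Submodule.mul_mem_mul ha hb)
  algebraMap_mem' c := by
    show (algebraMap ℂ C(OnePoint ℝ, ℂ)) c ∈ Submodule.span ℂ (Set.range VV)
    rw [Algebra.algebraMap_eq_smul_one, ← VV_zero]
    exact Submodule.smul_mem _ c (Submodule.subset_span ⟨0, rfl⟩)
  star_mem' {a} ha := by
    show star a ∈ Submodule.span ℂ (Set.range VV)
    have ha : a ∈ Submodule.span ℂ (Set.range VV) := ha
    clear * - ha
    induction ha using Submodule.span_induction with
    | mem g hg =>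
        obtain ⟨m, rfl⟩ := hg
        rw [star_VV m]
        exact Submodule.subset_span ⟨-m, rfl⟩
    | zero => rw [star_zero]; exact Submodule.zero_mem _
    | add x y _ _ hx hy => rw [star_add]; exact Submodule.add_mem _ hx hy
    | smul c x _ hx => rw [star_smul]; exact Submodule.smul_mem _ _ hx

lemma VAlg_carrier : (VAlg : Set C(OnePoint ℝ, ℂ)) = Submodule.span ℂ (Set.range VV) := rfl

lemma VAlg_dense : VAlg.topologicalClosure = ⊤ := by
  apply ContinuousMap.starSubalgebra_topologicalClosure_eq_top_of_separatesPoints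
  intro p q hpq
  exact ⟨_, ⟨VV 1, Submodule.subset_span ⟨1, rfl⟩, rfl⟩, VV_sep p q hpq⟩

/-- If an integrable function is orthogonal to all `VV m`, it is orthogonal to every
continuous function on the compactification. -/
lemma integral_eq_zero_of_orth (h : ℝ → ℂ) (hint : Integrable h (volume : Measure ℝ))
    (hm : ∀ m : ℤ, ∫ x : ℝ, h x * VV m x = 0) (g : C(OnePoint ℝ, ℂ)) :
    ∫ x : ℝ, h x * g x = 0 := by
  have hgint : ∀ g : C(OnePoint ℝ, ℂ), Integrable (fun x : ℝ => h x * g x) volume := by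
    intro g
    have := hint.bdd_mul (f := fun x : ℝ => g x)
      ((g.continuous.comp (OnePoint.continuous_coe)).aestronglyMeasurable)
      (c := ‖g‖) (Filter.Eventually.of_forall fun x => g.norm_coe_le_norm _)
    exact this.congr (Filter.Eventually.of_forall fun x => mul_comm _ _)
  let L : C(OnePoint ℝ, ℂ) →ₗ[ℂ] ℂ :=
  { toFun := fun g => ∫ x : ℝ, h x * g x
    map_add' := by
      intro g1 g2
      simp only [ContinuousMap.add_apply, mul_add]
      rw [integral_add (hgint g1) (hgint g2)]
    map_smul' := by
      intro c g
      simp only [ContinuousMap.smul_apply, smul_eq_mul, RingHom.id_apply]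
      rw [← integral_const_mul]
      congr 1; ext x; ring }
  have Lbound : ∀ g : C(OnePoint ℝ, ℂ), ‖L g‖ ≤ (∫ x : ℝ, ‖h x‖) * ‖g‖ := by
    intro g
    calc ‖∫ x : ℝ, h x * g x‖ ≤ ∫ x : ℝ, ‖h x * g x‖ := norm_integral_le_integral_norm _
    _ ≤ ∫ x : ℝ, ‖h x‖ * ‖g‖ := by
        apply integral_mono (hgint g).norm (hint.norm.mul_const _)
        intro x
        show ‖h x * g x‖ ≤ ‖h x‖ * ‖g‖
        rw [norm_mul]
        exact mul_le_mul_of_nonneg_left (g.norm_coe_le_norm _) (norm_nonneg _)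
    _ = (∫ x : ℝ, ‖h x‖) * ‖g‖ := integral_mul_const _ _
  let Lc : C(OnePoint ℝ, ℂ) →L[ℂ] ℂ := L.mkContinuous _ Lbound
  have hker : (VAlg : Set C(OnePoint ℝ, ℂ)) ⊆ ((LinearMap.ker (Lc : C(OnePoint ℝ, ℂ) →ₗ[ℂ] ℂ) : Submodule ℂ C(OnePoint ℝ, ℂ)) : Set C(OnePoint ℝ, ℂ)) := by
    rw [VAlg_carrier]
    have hle : Submodule.span ℂ (Set.range VV) ≤ LinearMap.ker (Lc : C(OnePoint ℝ, ℂ) →ₗ[ℂ] ℂ) := by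
      apply Submodule.span_le.2
      rintro _ ⟨m, rfl⟩
      exact LinearMap.mem_ker.2 (hm m)
    exact hle
  have hcl : g ∈ closure (VAlg : Set C(OnePoint ℝ, ℂ)) := by
    have h1 : g ∈ VAlg.topologicalClosure := VAlg_dense ▸ trivial
    exact h1
  have hclosed : IsClosed ((LinearMap.ker (Lc : C(OnePoint ℝ, ℂ) →ₗ[ℂ] ℂ) : Submodule ℂ C(OnePoint ℝ, ℂ)) :
      Set C(OnePoint ℝ, ℂ)) := by
    have heq : ((LinearMap.ker (Lc : C(OnePoint ℝ, ℂ) →ₗ[ℂ] ℂ) : Submodule ℂ C(OnePoint ℝ, ℂ)) : Set C(OnePoint ℝ, ℂ)) =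
        ⇑Lc ⁻¹' {0} := by
      ext a; simp [LinearMap.mem_ker]
    rw [heq]
    exact isClosed_singleton.preimage Lc.continuous
  have : g ∈ ((LinearMap.ker (Lc : C(OnePoint ℝ, ℂ) →ₗ[ℂ] ℂ) : Submodule ℂ C(OnePoint ℝ, ℂ)) : Set C(OnePoint ℝ, ℂ)) :=
    closure_minimal hker hclosed hcl
  simpa [Lc, L] using this

/-- If an integrable function is orthogonal to all `VV m`, it vanishes a.e. -/
lemma ae_zero_of_orth (h : ℝ → ℂ) (hint : Integrable h (volume : Measure ℝ))
    (hm : ∀ m : ℤ, ∫ x : ℝ, h x * VV m x = 0) :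
    h =ᵐ[(volume : Measure ℝ)] 0 := by
  apply ae_eq_zero_of_integral_contDiff_smul_eq_zero hint.locallyIntegrable
  intro g hgsmooth hgsupp
  have htend : Tendsto (fun x : ℝ => (g x : ℂ)) (coclosedCompact ℝ) (𝓝 0) := by
    apply Tendsto.congr' _ tendsto_const_nhds
    have hmem : (tsupport g)ᶜ ∈ coclosedCompact ℝ :=
      Filter.hasBasis_coclosedCompact.mem_iff.2 ⟨tsupport g, ⟨isClosed_tsupport g, hgsupp⟩, le_rfl⟩
    filter_upwards [hmem] with x hx
    simp [image_eq_zero_of_notMem_tsupport hx]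
  let G : C(OnePoint ℝ, ℂ) :=
    OnePoint.continuousMapMk
      ⟨fun x : ℝ => (g x : ℂ), Complex.continuous_ofReal.comp hgsmooth.continuous⟩ 0 htend
  have h0 := integral_eq_zero_of_orth h hint hm G
  have hGx : ∀ x : ℝ, G x = (g x : ℂ) := fun x => rfl
  rw [← h0]
  congr 1
  ext x
  rw [hGx x, Complex.real_smul]
  ring

/-- Conjugation of a complex power of a positive real. -/
lemma conj_cpow_real {r : ℝ} (hr : 0 < r) (s : ℂ) :
    (starRingEnd ℂ) ((r : ℂ) ^ s) = (r : ℂ) ^ ((starRingEnd ℂ) s) := by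
  have hne : (r : ℂ) ≠ 0 := by exact_mod_cast hr.ne'
  rw [Complex.cpow_def_of_ne_zero hne, Complex.cpow_def_of_ne_zero hne, ← Complex.exp_conj,
    map_mul]
  congr 1
  rw [← Complex.ofReal_log hr.le, Complex.conj_ofReal]

lemma norm_cpow_real {r : ℝ} (hr : 0 < r) (s : ℂ) :
    ‖(r : ℂ) ^ s‖ = r ^ s.re :=
  Complex.norm_cpow_eq_rpow_re_of_pos hr s

/-- The weight `(1+x²)^s` with `Re s = -1/2` is in `L²`. -/
lemma weight_memLp (s : ℂ) (hs : s.re = -(1/2)) :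
    MemLp (fun x : ℝ => ((1 + x ^ 2 : ℝ) : ℂ) ^ s) 2 (volume : Measure ℝ) := by
  have hpos : ∀ x : ℝ, (0 : ℝ) < 1 + x ^ 2 := fun x => by positivity
  have hcont : Continuous fun x : ℝ => ((1 + x ^ 2 : ℝ) : ℂ) ^ s := by
    have h1 : Continuous fun x : ℝ => Real.log (1 + x ^ 2) := by
      rw [continuous_iff_continuousAt]
      intro x
      exact ContinuousAt.comp (f := fun x : ℝ => 1 + x ^ 2)
        (Real.continuousAt_log (hpos x).ne') (by fun_prop)
    have heq : (fun x : ℝ => ((1 + x ^ 2 : ℝ) : ℂ) ^ s) =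
        fun x : ℝ => Complex.exp ((Real.log (1 + x ^ 2) : ℂ) * s) := by
      ext x
      rw [Complex.cpow_def_of_ne_zero (by exact_mod_cast (hpos x).ne')]
      rw [← Complex.ofReal_log (hpos x).le]
    rw [heq]
    exact Complex.continuous_exp.comp ((Complex.continuous_ofReal.comp h1).mul continuous_const)
  rw [memLp_two_iff_integrable_sq_norm hcont.aestronglyMeasurable]
  have heq2 : (fun x : ℝ => ‖((1 + x ^ 2 : ℝ) : ℂ) ^ s‖ ^ 2) = fun x : ℝ => (1 + x ^ 2)⁻¹ := by
    ext x
    rw [norm_cpow_real (hpos x), hs]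
    rw [← Real.rpow_natCast ((1 + x ^ 2) ^ (-(1/2) : ℝ)) 2, ← Real.rpow_mul (hpos x).le]
    norm_num [Real.rpow_neg_one]
  rw [heq2]
  exact integrable_inv_one_add_sq

end EllipticAux

/-- The elliptic basis functions `e_m^l(x) = π^{-1/2} ((x-i)/(x+i))^m (1+x²)^l`
for `l = -1/2 + iλ`. -/
noncomputable def ellipticBasis (lam : ℝ) (m : ℤ) (x : ℝ) : ℂ :=
  (Real.pi : ℂ) ^ (-(1/2) : ℂ) * (((x : ℂ) - Complex.I) / ((x : ℂ) + Complex.I)) ^ m *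
    ((1 + x ^ 2 : ℝ) : ℂ) ^ (-(1/2) + Complex.I * lam : ℂ)

lemma VV_apply_coe (m : ℤ) (x : ℝ) : VV m x = ((cayley x : ℂ)) ^ m := by
  rw [VV_apply, cayleyOP_coe]

/-- The linear span of `{e_m^l : m ∈ ℤ}` is dense in `L²(ℝ, ℂ)`:
any `f ∈ L²` orthogonal to all `e_m^l` vanishes almost everywhere. -/
theorem statement5 (lam : ℝ) (f : ℝ → ℂ) (hf : MemLp f 2 (volume : Measure ℝ))
    (horth : ∀ m : ℤ, (∫ x : ℝ, f x * conj (ellipticBasis lam m x)) = 0) :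
    f =ᵐ[(volume : Measure ℝ)] 0 := by
  classical
  set lbar : ℂ := -(1/2) - Complex.I * lam with hlbar
  set w : ℝ → ℂ := fun x => ((1 + x ^ 2 : ℝ) : ℂ) ^ lbar with hw
  set h : ℝ → ℂ := fun x => f x * w x with hh
  have hpos : ∀ x : ℝ, (0 : ℝ) < 1 + x ^ 2 := fun x => by positivity
  have hbase_ne : ∀ x : ℝ, ((1 + x ^ 2 : ℝ) : ℂ) ≠ 0 := fun x => by
    exact_mod_cast (hpos x).ne'
  have hwne : ∀ x : ℝ, w x ≠ 0 := fun x => by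
    simp only [hw]
    rw [Ne, Complex.cpow_eq_zero_iff]
    push_neg
    intro hc
    exact absurd hc (hbase_ne x)
  -- integrability of h
  have hwmem : MemLp w 2 (volume : Measure ℝ) := by
    apply weight_memLp
    simp [hlbar]
  have hint : Integrable h (volume : Measure ℝ) := by
    rw [← memLp_one_iff_integrable]
    have h111 : (1 : ENNReal) / 1 = 1 / 2 + 1 / 2 := by
      rw [ENNReal.div_add_div_same]
      norm_num
      rw [ENNReal.div_self] <;> norm_num
    have hsm := MemLp.smul (φ := w) (r := 1) hf hwmem
    have hfun : h = w • f := by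
      funext x
      show h x = w x * f x
      rw [hh]; ring
    rw [hfun]
    exact hsm
  -- the constant
  set c : ℂ := (Real.pi : ℂ) ^ (-(1/2) : ℂ) with hc
  have hcne : c ≠ 0 := by
    rw [hc, Ne, Complex.cpow_eq_zero_iff]
    push_neg
    intro hpi
    exact absurd hpi (by exact_mod_cast Real.pi_ne_zero)
  have hcconj : conj c = c := by
    rw [hc]
    have : ((-(1/2) : ℝ) : ℂ) = (-(1/2) : ℂ) := by norm_num
    rw [← this, ← Complex.ofReal_cpow Real.pi_pos.le, Complex.conj_ofReal]
  -- conjugate of the basis function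
  have hconj : ∀ m : ℤ, ∀ x : ℝ,
      conj (ellipticBasis lam m x) = c * (((cayley x : ℂ)) ^ m * w x) := by
    intro m x
    rw [ellipticBasis, map_mul, map_mul, hcconj]
    have h1 : conj ((((x : ℂ) - Complex.I) / ((x : ℂ) + Complex.I)) ^ m)
        = ((cayley x : ℂ)) ^ m := by
      rw [map_zpow₀, map_div₀, map_sub, map_add, Complex.conj_ofReal, Complex.conj_I,
        cayley_coe]
      ring_nf
    have h2 : conj (((1 + x ^ 2 : ℝ) : ℂ) ^ (-(1/2) + Complex.I * lam : ℂ)) = w x := by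
      rw [conj_cpow_real (hpos x), hw]
      congr 1
      rw [map_add, map_neg, map_mul, Complex.conj_I, Complex.conj_ofReal]
      have : conj ((1/2 : ℂ)) = (1/2 : ℂ) := by
        rw [show (1/2 : ℂ) = ((1/2 : ℝ) : ℂ) by norm_num, Complex.conj_ofReal]
      rw [this, hlbar]
      ring
    rw [h1, h2]
    ring
  -- orthogonality in the new form
  have hm : ∀ m : ℤ, ∫ x : ℝ, h x * VV m x = 0 := by
    intro m
    have := horth m
    have heq : (fun x : ℝ => f x * conj (ellipticBasis lam m x))
        = fun x : ℝ => c * (h x * VV m x) := by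
      ext x
      rw [hconj m x, VV_apply_coe, hh]
      ring
    rw [heq, integral_const_mul] at this
    exact (mul_eq_zero.1 this).resolve_left hcne
  -- conclude
  have hae := ae_zero_of_orth h hint hm
  filter_upwards [hae] with x hx
  have : f x * w x = 0 := hx
  rcases mul_eq_zero.1 this with h' | h'
  · exact h'
  · exact absurd h' (hwne x)
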